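/- Let φ be a 3-CNF formula with clauses c_1, ..., c_m over variables x_1, ..., x_n, and let G_φ be the graph with vertex set {c_1, ..., c_m} ∪ {x_i, x̄_i : i ∈ [n]} ∪ {s, t} and edge set {c_i c_j : 1 ≤ i < j ≤ m} ∪ {t x_i, t x̄_i : i ∈ [n]} ∪ {x_i c_j : the literal x_i occurs in clause c_j} ∪ {x̄_i c_j : the literal x̄_i occurs in clause c_j} ∪ {s t}. If a coloring c of V(G_φ) with two colors makes G_φ rainbow vertex-connected, then for every clause c_i there is a literal ℓ occurring in c_i such that c(ℓ) ≠ c(t); in particular every rainbow path from s to c_i has the form s, t, ℓ, c_i for some literal ℓ occurring in c_i. -/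

import Mathlib

open SimpleGraph

/-- A walk is a rainbow path if it is a path and its internal vertices
(the support without the first and last vertex) receive pairwise distinct colors. -/
def IsRainbowPath {V α : Type*} (G : SimpleGraph V) (c : V → α) {u v : V}
    (p : G.Walk u v) : Prop :=
  p.IsPath ∧ (p.support.tail.dropLast.map c).Nodup

/-- A vertex coloring makes a graph rainbow vertex-connected if every two distinct
vertices are joined by a rainbow path. -/
def RainbowVertexConnected {V α : Type*} (G : SimpleGraph V) (c : V → α) : Prop :=
  ∀ u v : V, u ≠ v → ∃ p : G.Walk u v, IsRainbowPath G c p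

namespace SatGraph

variable {m n : ℕ}

/-- Vertices of `G_φ`: the clause vertices `c_i = Sum.inl i`, the literal vertices
`x_j = Sum.inr (Sum.inl (j, true))` and `x̄_j = Sum.inr (Sum.inl (j, false))`, and
`s = Sum.inr (Sum.inr true)`, `t = Sum.inr (Sum.inr false)`. -/
def Vert (m n : ℕ) : Type := Fin m ⊕ ((Fin n × Bool) ⊕ Bool)

/-- The adjacency generating relation of `G_φ`: the clause vertices form a clique, `t` is
joined to every literal vertex, each literal is joined to the clauses in which it occurs,
and `s` is joined to `t`. -/
def rel (φ : Fin m → Finset (Fin n × Bool)) : Vert m n → Vert m n → Prop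
  | Sum.inl _, Sum.inl _ => True
  | Sum.inr (Sum.inr false), Sum.inr (Sum.inl _) => True
  | Sum.inr (Sum.inl l), Sum.inl i => l ∈ φ i
  | Sum.inr (Sum.inr true), Sum.inr (Sum.inr false) => True
  | _, _ => False

/-- The graph `G_φ`. -/
def graph (φ : Fin m → Finset (Fin n × Bool)) : SimpleGraph (Vert m n) :=
  SimpleGraph.fromRel (rel φ)

end SatGraph


namespace SatGraph

lemma adj_s' {m n : ℕ} {φ : Fin m → Finset (Fin n × Bool)} {v : Vert m n}
    (h : (graph φ).Adj (Sum.inr (Sum.inr true)) v) : v = Sum.inr (Sum.inr false) := by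
  obtain ⟨hne, h | h⟩ := h <;> rcases v with i | l | (_|_) <;> first | rfl | simp_all [rel]

lemma adj_t' {m n : ℕ} {φ : Fin m → Finset (Fin n × Bool)} {v : Vert m n}
    (h : (graph φ).Adj (Sum.inr (Sum.inr false)) v) :
    v = Sum.inr (Sum.inr true) ∨ ∃ l, v = Sum.inr (Sum.inl l) := by
  obtain ⟨hne, h | h⟩ := h <;> rcases v with i | l | (_|_) <;>
    first
    | exact Or.inr ⟨_, rfl⟩
    | exact Or.inl rfl
    | simp_all [rel]

lemma adj_lit' {m n : ℕ} {φ : Fin m → Finset (Fin n × Bool)} {l : Fin n × Bool} {v : Vert m n}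
    (h : (graph φ).Adj (Sum.inr (Sum.inl l)) v) :
    v = Sum.inr (Sum.inr false) ∨ ∃ j, v = Sum.inl j ∧ l ∈ φ j := by
  obtain ⟨hne, h | h⟩ := h <;> rcases v with i | l' | (_|_) <;>
    simp only [rel] at h <;>
    first
    | exact Or.inr ⟨_, rfl, h⟩
    | exact Or.inl rfl

end SatGraph

open SatGraph in
/-- if a two-coloring `c` makes `G_φ` rainbow vertex-connected, then every
clause `c_i` contains a literal `ℓ` with `c(ℓ) ≠ c(t)`; in particular every rainbow path
from `s` to `c_i` has support `[s, t, ℓ, c_i]` for some literal `ℓ` occurring in `c_i`. -/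
theorem clause_has_literal_colored_ne_t {m n : ℕ} (φ : Fin m → Finset (Fin n × Bool))
    (h3 : ∀ i, (φ i).card ≤ 3) (c : Vert m n → Fin 2)
    (hc : RainbowVertexConnected (graph φ) c) :
    ∀ i : Fin m,
      (∃ l ∈ φ i, c (Sum.inr (Sum.inl l)) ≠ c (Sum.inr (Sum.inr false))) ∧
      ∀ p : (graph φ).Walk (Sum.inr (Sum.inr true)) (Sum.inl i),
        IsRainbowPath (graph φ) c p →
          ∃ l ∈ φ i, p.support =
            [Sum.inr (Sum.inr true), Sum.inr (Sum.inr false),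
              Sum.inr (Sum.inl l), Sum.inl i] := by
  
  intro i
  have key : ∀ p : (graph φ).Walk (Sum.inr (Sum.inr true)) (Sum.inl i),
      IsRainbowPath (graph φ) c p →
        ∃ l ∈ φ i, p.support =
          [Sum.inr (Sum.inr true), Sum.inr (Sum.inr false),
            Sum.inr (Sum.inl l), Sum.inl i] := by
    intro p hp
    obtain ⟨hpath, hrb⟩ := hp
    cases p with
    | cons h q =>
      obtain rfl := adj_s' h
      cases q with
      | cons h' q =>
        rcases adj_t' h' with rfl | ⟨l, rfl⟩
        · exfalso
          have := hpath.support_nodup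
          replace this := List.nodup_cons.mp (show List.Nodup (_ :: _ :: q.support) from this)
          exact this.1 (List.mem_cons_of_mem _ q.start_mem_support)
        · cases q with
          | cons h'' q =>
            rcases adj_lit' h'' with rfl | ⟨j, rfl, hl⟩
            · exfalso
              have := hpath.support_nodup
              have h5 : List.Nodup (_ :: _ :: _ :: q.support) := this
              replace this := And.intro (List.nodup_cons.mp h5).1
                (List.nodup_cons.mp (List.nodup_cons.mp h5).2)
              exact this.2.1 (List.mem_cons_of_mem _ q.start_mem_support)
            · cases q with
              | nil =>
                exact ⟨l, hl, rfl⟩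
              | cons h''' q =>
                exfalso
                have h2 := hrb.length_le_card
                simp only [List.length_map, List.length_dropLast, List.length_tail,
                  SimpleGraph.Walk.support_cons, List.length_cons,
                  SimpleGraph.Walk.length_support, Fintype.card_fin] at h2
                have h5 := List.length_pos_of_mem q.start_mem_support
                change q.support.length + 1 + 1 + 1 + 1 - 1 - 1 ≤ 2 at h2
                omega
  refine ⟨?_, key⟩
  obtain ⟨p, hp⟩ := hc (Sum.inr (Sum.inr true)) (Sum.inl i) (by intro h; cases h)
  obtain ⟨l, hl, hsup⟩ := key p hp
  refine ⟨l, hl, ?_⟩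
  have := hp.2
  rw [hsup] at this
  intro hcol
  have h4 : [c (Sum.inr (Sum.inr false)), c (Sum.inr (Sum.inl l))].Nodup := this
  exact (List.nodup_cons.mp h4).1 (by rw [hcol]; exact List.mem_singleton_self _)
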